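/- arXiv:1912.11116 — 13 statements merged into one kernel-verified Lean document; each statement's English description precedes it below -/
import Mathlib

section
/- Let (x_n) be a sequence in a field satisfying x_n·x_{n+2k+l} = x_{n+2k}·x_{n+l} + x_{n+k} + x_{n+k+l} for all n (with all x_n nonzero), and define z_n = x_n + x_{n+l}. Then z_n·x_{n+2k+l} = x_{n+l}·z_{n+2k} + z_{n+k} for all n. -/
theorem littlepi_z_identity_1 {F : Type*} [Field F] (k l : ℤ) (hk : 0 < k) (hl : 0 < l)
    (x : ℤ → F) (hx : ∀ n, x n ≠ 0)
    (hrec : ∀ n : ℤ, x n * x (n + 2*k + l) = x (n + 2*k) * x (n + l) + x (n + k) + x (n + k + l))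
    (z : ℤ → F) (hz : ∀ n, z n = x n + x (n + l)) :
    ∀ n : ℤ, z n * x (n + 2*k + l) = x (n + l) * z (n + 2*k) + z (n + k) := by
  intro n
  have h := hrec n
  rw [hz, hz, hz]
  have e1 : n + 2 * k + l = n + (2 * k + l) := by ring
  have e2 : n + k + l = n + (k + l) := by ring
  have e3 : n + 2 * k + l = n + 2 * k + l := rfl
  linear_combination h
end

section
/- Let (x_n) be a sequence of nonzero field elements satisfying the Little Pi recurrence. Define δ_n to be the 3×3 determinant with rows (x_n, x_{n+2k}, x_{n+4k}), (x_{n+l}, x_{n+2k+l}, x_{n+4k+l}), (x_{n+2l}, x_{n+2k+2l}, x_{n+4k+2l}). Then x_{n+2k+l}·δ_n equals the 2×2 determinant with rows (z_{n+k}, z_{n+3k}), (z_{n+k+l}, z_{n+3k+l}), where z_m = x_m + x_{m+l}. -/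
theorem littlepi_condensation {F : Type*} [Field F] (k l : ℤ) (hk : 0 < k) (hl : 0 < l)
    (x : ℤ → F) (hx : ∀ n, x n ≠ 0)
    (hrec : ∀ n : ℤ, x n * x (n + 2*k + l) = x (n + 2*k) * x (n + l) + x (n + k) + x (n + k + l))
    (z : ℤ → F) (hz : ∀ n, z n = x n + x (n + l)) :
    ∀ n : ℤ,
      x (n + 2*k + l) *
        (Matrix.det !![x n, x (n + 2*k), x (n + 4*k);
                       x (n + l), x (n + 2*k + l), x (n + 4*k + l);
                       x (n + 2*l), x (n + 2*k + 2*l), x (n + 4*k + 2*l)]) =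
      Matrix.det !![z (n + k), z (n + 3*k);
                    z (n + k + l), z (n + 3*k + l)] := by
  intro n
  have h1 := hrec n
  have h2 := hrec (n + 2*k)
  have h3 := hrec (n + l)
  have h4 := hrec (n + 2*k + l)
  simp only [hz, Matrix.det_fin_three, Matrix.det_fin_two, Matrix.cons_val_zero, Matrix.cons_val_one, Matrix.head_cons, Matrix.head_fin_const, Matrix.cons_val_fin_one, Matrix.cons_val_two, Matrix.tail_cons, Matrix.of_apply, Matrix.cons_val']
  ring_nf at h1 h2 h3 h4 ⊢
  linear_combination (x (n + k*2 + l) * x (n + k*4 + l*2) - x (n + k*4 + l) * x (n + k*2 + l*2)) * h1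
    + (x (n + k) + x (n + k + l)) * h4
    - (x (n + l) * x (n + k*2 + l*2) - x (n + k*2 + l) * x (n + l*2)) * h2
    - (x (n + k*3) + x (n + k*3 + l)) * h3
end

section
/- Let (x_n) be a sequence of nonzero field elements satisfying the Little Pi recurrence, and let δ_n be the 3×3 Casorati determinant det[[x_n, x_{n+2k}, x_{n+4k}],[x_{n+l}, x_{n+2k+l}, x_{n+4k+l}],[x_{n+2l}, x_{n+2k+2l}, x_{n+4k+2l}]]. Then δ_{n+k} = δ_n for all n, i.e. δ is periodic with period k. -/
theorem littlepi_delta_periodic {F : Type*} [Field F] (k l : ℤ) (hk : 0 < k) (hl : 0 < l)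
    (x : ℤ → F) (hx : ∀ n, x n ≠ 0)
    (hrec : ∀ n : ℤ, x n * x (n + 2*k + l) = x (n + 2*k) * x (n + l) + x (n + k) + x (n + k + l))
    (δ : ℤ → F)
    (hδ : ∀ n, δ n = Matrix.det !![x n, x (n + 2*k), x (n + 4*k);
                                    x (n + l), x (n + 2*k + l), x (n + 4*k + l);
                                    x (n + 2*l), x (n + 2*k + 2*l), x (n + 4*k + 2*l)]) :
    ∀ n : ℤ, δ (n + k) = δ n := by
  intro n
  have g0 := hrec n
  have g1 := hrec (n + k)
  have g2 := hrec (n + l)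
  have g3 := hrec (n + k + l)
  have g4 := hrec (n + 2*k)
  have g5 := hrec (n + 2*k + l)
  have g6 := hrec (n + 3*k)
  have g7 := hrec (n + 3*k + l)
  have key : δ (n+k) * (x (n+2*k+l) * x (n+3*k+l)) = δ n * (x (n+2*k+l) * x (n+3*k+l)) := by
    rw [hδ, hδ]
    simp only [Matrix.det_fin_three, Matrix.cons_val', Matrix.cons_val_zero, Matrix.cons_val_one,
      Matrix.head_cons, Matrix.empty_val', Matrix.cons_val_fin_one, Matrix.head_fin_const,
      Matrix.cons_val_two, Matrix.tail_cons, Matrix.of_apply]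
    linear_combination (norm := ring_nf)
      x (n+2*k+l) * ((x (n+4*k+l) + x (n+4*k+2*l)) * g1
        + (x (n+k) * x (n+3*k+l) - x (n+3*k) * x (n+k+l)) * g7
        - (x (n+4*k) + x (n+4*k+l)) * g3
        - (x (n+k+l) * x (n+3*k+2*l) - x (n+3*k+l) * x (n+k+2*l)) * g6)
      - x (n+3*k+l) * ((x (n+3*k+l) + x (n+3*k+2*l)) * g0
        + (x n * x (n+2*k+l) - x (n+2*k) * x (n+l)) * g5
        - (x (n+3*k) + x (n+3*k+l)) * g2
        - (x (n+l) * x (n+2*k+2*l) - x (n+2*k+l) * x (n+2*l)) * g4)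
      + (x (n+2*k) * g5 + x (n+2*k+2*l) * g4 - x (n+3*k+2*l) * g1 - x (n+3*k) * g3)
      + x (n+2*k+l) * (g4 + g5) - x (n+3*k+l) * (g1 + g3)
  exact mul_right_cancel₀ (mul_ne_zero (hx _) (hx _)) key
end

section
/- Let (x_n) be a sequence of positive real numbers satisfying the Little Pi recurrence x_n·x_{n+2k+l} = x_{n+2k}·x_{n+l} + x_{n+k} + x_{n+k+l}. Then the 3×3 determinant δ_n = det[[x_n, x_{n+2k}, x_{n+4k}],[x_{n+l}, x_{n+2k+l}, x_{n+4k+l}],[x_{n+2l}, x_{n+2k+2l}, x_{n+4k+2l}]] is nonzero for every n. -/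
theorem littlepi_delta_nonzero (k l : ℤ) (hk : 0 < k) (hl : 0 < l)
    (x : ℤ → ℝ) (hx : ∀ n, 0 < x n)
    (hrec : ∀ n : ℤ, x n * x (n + 2*k + l) = x (n + 2*k) * x (n + l) + x (n + k) + x (n + k + l)) :
    ∀ n : ℤ,
      Matrix.det !![x n, x (n + 2*k), x (n + 4*k);
                    x (n + l), x (n + 2*k + l), x (n + 4*k + l);
                    x (n + 2*l), x (n + 2*k + 2*l), x (n + 4*k + 2*l)] ≠ 0 := by
  intro n
  have h00 := hrec n
  have h01 : x (n+l) * x (n+2*k+2*l) = x (n+2*k+l) * x (n+2*l) + x (n+k+l) + x (n+k+2*l) := by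
    have h := hrec (n+l)
    rw [show n+l+2*k+l = n+2*k+2*l from by ring, show n+l+2*k = n+2*k+l from by ring,
        show n+l+k+l = n+k+2*l from by ring, show n+l+k = n+k+l from by ring,
        show n+l+l = n+2*l from by ring] at h
    exact h
  have h10 : x (n+k) * x (n+3*k+l) = x (n+3*k) * x (n+k+l) + x (n+2*k) + x (n+2*k+l) := by
    have h := hrec (n+k)
    rw [show n+k+2*k+l = n+3*k+l from by ring, show n+k+2*k = n+3*k from by ring,
        show n+k+k+l = n+2*k+l from by ring, show n+k+k = n+2*k from by ring,
        show n+k+l = n+k+l from rfl] at h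
    exact h
  have h11 : x (n+k+l) * x (n+3*k+2*l) = x (n+3*k+l) * x (n+k+2*l) + x (n+2*k+l) + x (n+2*k+2*l) := by
    have h := hrec (n+k+l)
    rw [show n+k+l+2*k+l = n+3*k+2*l from by ring, show n+k+l+2*k = n+3*k+l from by ring,
        show n+k+l+k+l = n+2*k+2*l from by ring, show n+k+l+k = n+2*k+l from by ring,
        show n+k+l+l = n+k+2*l from by ring] at h
    exact h
  have h20 : x (n+2*k) * x (n+4*k+l) = x (n+4*k) * x (n+2*k+l) + x (n+3*k) + x (n+3*k+l) := by
    have h := hrec (n+2*k)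
    rw [show n+2*k+2*k+l = n+4*k+l from by ring, show n+2*k+2*k = n+4*k from by ring,
        show n+2*k+k+l = n+3*k+l from by ring, show n+2*k+k = n+3*k from by ring] at h
    exact h
  have h21 : x (n+2*k+l) * x (n+4*k+2*l) = x (n+4*k+l) * x (n+2*k+2*l) + x (n+3*k+l) + x (n+3*k+2*l) := by
    have h := hrec (n+2*k+l)
    rw [show n+2*k+l+2*k+l = n+4*k+2*l from by ring, show n+2*k+l+2*k = n+4*k+l from by ring,
        show n+2*k+l+k+l = n+3*k+2*l from by ring, show n+2*k+l+k = n+3*k+l from by ring,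
        show n+2*k+l+l = n+2*k+2*l from by ring] at h
    exact h
  have key :
      Matrix.det !![x n, x (n + 2*k), x (n + 4*k);
                    x (n + l), x (n + 2*k + l), x (n + 4*k + l);
                    x (n + 2*l), x (n + 2*k + 2*l), x (n + 4*k + 2*l)]
        * (x (n+k+l) * x (n+2*k+l))
      = (x (n+k) + x (n+k+l)) * (x (n+2*k+l) + x (n+2*k+2*l))
        + (x (n+2*k) + x (n+2*k+l)) * (x (n+k+l) + x (n+k+2*l)) := by
    simp [Matrix.det_fin_three]
    linear_combination
      (x (n+k+l) * x (n+2*k+l) * x (n+4*k+2*l) - x (n+k+l) * x (n+2*k+2*l) * x (n+4*k+l)) * h00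
      + (x (n+k+l) * x (n+2*k+l) * x (n+4*k) - x (n+k+l) * x (n+2*k) * x (n+4*k+l)) * h01
      + (x (n+k+l) + x (n+k+2*l)) * h10
      + (x (n+k) + x (n+k+l)) * h11
      - (x (n+k+l) * x (n+k+l) + x (n+k+l) * x (n+k+2*l)) * h20
      + (x (n+k) * x (n+k+l) + x (n+k+l) * x (n+k+l)) * h21
  intro hδ
  rw [hδ, zero_mul] at key
  have p1 := mul_pos (add_pos (hx (n+k)) (hx (n+k+l))) (add_pos (hx (n+2*k+l)) (hx (n+2*k+2*l)))
  have p2 := mul_pos (add_pos (hx (n+2*k)) (hx (n+2*k+l))) (add_pos (hx (n+k+l)) (hx (n+k+2*l)))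
  linarith
end

section
/- Let (x_n) be a sequence of positive reals satisfying the Little Pi recurrence. Then the 4×4 Casorati determinant det[[x_{n+2ki+lj}]]_{0≤i,j≤3} (rows indexed by j = 0,1,2,3 shifts by l, columns by i = 0,1,2,3 shifts by 2k) is identically zero, i.e., det of the matrix with (r,c) entry x_{n+2k(c-1)+l(r-1)} vanishes for all n. -/
/-- The 3×3 Casorati determinant with column step `2k` and row step `l`, expanded. -/
def littlepiDelta (x : ℤ → ℝ) (k l m : ℤ) : ℝ :=
  x m * (x (m+2*k+l) * x (m+4*k+2*l) - x (m+4*k+l) * x (m+2*k+2*l))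
  - x (m+2*k) * (x (m+l) * x (m+4*k+2*l) - x (m+4*k+l) * x (m+2*l))
  + x (m+4*k) * (x (m+l) * x (m+2*k+2*l) - x (m+2*k+l) * x (m+2*l))

/-- Auxiliary polynomial from Dodgson condensation of the 3×3 determinant. -/
def littlepiG (x : ℤ → ℝ) (k l m : ℤ) : ℝ :=
  (x (m+2*k) + 2*x (m+2*k+l) + x (m+2*k+2*l)) * x (m+3*k+l)
  + x (m+3*k+2*l) * (x (m+2*k) + x (m+2*k+l))
  + x (m+3*k) * (x (m+2*k+l) + x (m+2*k+2*l))

lemma littlepi_hA (k l : ℤ) (x : ℤ → ℝ)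
    (hrec : ∀ n : ℤ, x n * x (n + 2*k + l) = x (n + 2*k) * x (n + l) + x (n + k) + x (n + k + l))
    (m : ℤ) :
    littlepiDelta x k l m * (x (m+2*k+l) * x (m+3*k+l)) = littlepiG x k l m := by
  unfold littlepiDelta littlepiG
  linear_combination (norm := ring_nf)
    (x (m+3*k+l) * (x (m+2*k+l) * x (m+4*k+2*l) - x (m+4*k+l) * x (m+2*k+2*l))) * hrec m
    + (x (m+3*k+l) * (x (m+k) + x (m+k+l))) * hrec (m+2*k+l)
    - (x (m+3*k+l) * (x (m+l) * x (m+2*k+2*l) - x (m+2*k+l) * x (m+2*l))) * hrec (m+2*k)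
    - (x (m+3*k+l) * (x (m+3*k) + x (m+3*k+l))) * hrec (m+l)
    + (x (m+3*k+l) + x (m+3*k+2*l)) * hrec (m+k)
    + (x (m+3*k+l) + x (m+3*k)) * hrec (m+k+l)

lemma littlepi_hP (k l : ℤ) (x : ℤ → ℝ)
    (hrec : ∀ n : ℤ, x n * x (n + 2*k + l) = x (n + 2*k) * x (n + l) + x (n + k) + x (n + k + l))
    (m : ℤ) :
    littlepiG x k l (m+k) * x (m+2*k+l) = littlepiG x k l m * x (m+4*k+l) := by
  unfold littlepiG
  linear_combination (norm := ring_nf)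
    (x (m+3*k) + x (m+3*k+l)) * hrec (m+2*k+l)
    - (x (m+3*k+l) + x (m+3*k+2*l)) * hrec (m+2*k)

lemma littlepi_period (k l : ℤ) (x : ℤ → ℝ) (hx : ∀ n, 0 < x n)
    (hrec : ∀ n : ℤ, x n * x (n + 2*k + l) = x (n + 2*k) * x (n + l) + x (n + k) + x (n + k + l))
    (m : ℤ) :
    littlepiDelta x k l (m+k) = littlepiDelta x k l m := by
  have h1 := littlepi_hA k l x hrec m
  have h2 := littlepi_hA k l x hrec (m+k)
  have h3 := littlepi_hP k l x hrec m
  have key : littlepiDelta x k l (m+k) * (x (m+2*k+l) * x (m+3*k+l) * x (m+4*k+l))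
      = littlepiDelta x k l m * (x (m+2*k+l) * x (m+3*k+l) * x (m+4*k+l)) := by
    linear_combination (norm := ring_nf) x (m+2*k+l) * h2 - x (m+4*k+l) * h1 + h3
  exact mul_right_cancel₀
    (mul_pos (mul_pos (hx _) (hx _)) (hx _)).ne' key


lemma littlepi_det_fin_four (A : Matrix (Fin 4) (Fin 4) ℝ) : A.det =
    A 0 0 * (A 1 1 * (A 2 2 * A 3 3 - A 2 3 * A 3 2) - A 1 2 * (A 2 1 * A 3 3 - A 2 3 * A 3 1)
      + A 1 3 * (A 2 1 * A 3 2 - A 2 2 * A 3 1))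
    - A 0 1 * (A 1 0 * (A 2 2 * A 3 3 - A 2 3 * A 3 2) - A 1 2 * (A 2 0 * A 3 3 - A 2 3 * A 3 0)
      + A 1 3 * (A 2 0 * A 3 2 - A 2 2 * A 3 0))
    + A 0 2 * (A 1 0 * (A 2 1 * A 3 3 - A 2 3 * A 3 1) - A 1 1 * (A 2 0 * A 3 3 - A 2 3 * A 3 0)
      + A 1 3 * (A 2 0 * A 3 1 - A 2 1 * A 3 0))
    - A 0 3 * (A 1 0 * (A 2 1 * A 3 2 - A 2 2 * A 3 1) - A 1 1 * (A 2 0 * A 3 2 - A 2 2 * A 3 0)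
      + A 1 2 * (A 2 0 * A 3 1 - A 2 1 * A 3 0)) := by
  rw [Matrix.det_succ_row_zero]
  simp only [Fin.sum_univ_four, Matrix.det_fin_three, Matrix.submatrix_apply, Fin.succAbove,
    Fin.isValue]
  norm_num [Fin.lt_def, show (Fin.succ 2 : Fin 4) = 3 from rfl,
    show (Fin.castSucc 2 : Fin 4) = 2 from rfl, show ((3:Fin 4):ℕ) = 3 from rfl]
  ring

theorem littlepi_4x4_vanishes (k l : ℤ) (hk : 0 < k) (hl : 0 < l)
    (x : ℤ → ℝ) (hx : ∀ n, 0 < x n)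
    (hrec : ∀ n : ℤ, x n * x (n + 2*k + l) = x (n + 2*k) * x (n + l) + x (n + k) + x (n + k + l)) :
    ∀ n : ℤ,
      Matrix.det (Matrix.of fun r c : Fin 4 => x (n + 2*k*(c : ℤ) + l*(r : ℤ))) = 0 := by
  intro n
  have hper := littlepi_period k l x hx hrec
  have h2k : ∀ m : ℤ, littlepiDelta x k l (m+2*k) = littlepiDelta x k l m := by
    intro m
    have a := hper (m+k)
    have b := hper m
    have e : m + 2*k = m + k + k := by ring
    rw [e, a, b]
  -- Dodgson condensation for the 4×4 determinant (a ring identity)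
  have hD : Matrix.det (Matrix.of fun r c : Fin 4 => x (n + 2*k*(c : ℤ) + l*(r : ℤ)))
        * (x (n+2*k+l) * x (n+4*k+2*l) - x (n+4*k+l) * x (n+2*k+2*l))
      = littlepiDelta x k l n * littlepiDelta x k l (n+2*k+l)
        - littlepiDelta x k l (n+2*k) * littlepiDelta x k l (n+l) := by
    rw [littlepi_det_fin_four]
    simp only [Matrix.of_apply, show ((0:Fin 4):ℤ) = 0 from rfl, show ((1:Fin 4):ℤ) = 1 from rfl,
      show ((2:Fin 4):ℤ) = 2 from rfl, show ((3:Fin 4):ℤ) = 3 from rfl]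
    unfold littlepiDelta
    ring_nf
  have e1 : littlepiDelta x k l (n+2*k+l) = littlepiDelta x k l (n+l) := by
    have := h2k (n+l)
    have e : n + l + 2*k = n + 2*k + l := by ring
    rw [e] at this
    exact this
  have e2 : littlepiDelta x k l (n+2*k) = littlepiDelta x k l n := h2k n
  rw [e1, e2] at hD
  have hint : x (n+2*k+l) * x (n+4*k+2*l) - x (n+4*k+l) * x (n+2*k+2*l)
      = x (n+3*k+l) + x (n+3*k+2*l) := by
    linear_combination (norm := ring_nf) hrec (n+2*k+l)
  rw [hint] at hD
  have hpos : (0:ℝ) < x (n+3*k+l) + x (n+3*k+2*l) := by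
    have := hx (n+3*k+l); have := hx (n+3*k+2*l); linarith
  have := hD
  rw [sub_self] at this
  exact (mul_eq_zero.mp this).resolve_right hpos.ne'
end

section
/- Suppose a sequence (x_n) of positive reals satisfies the Little Pi recurrence, and suppose there exist sequences (K⁽²⁾_n), (K⁽³⁾_n), each periodic with period l, such that x_{n+6k} + K⁽³⁾_n·x_{n+4k} + K⁽²⁾_n·x_{n+2k} − x_n = 0 for all n, and such that the 2×2 determinant det[[z_{n+3k}, z_{n+3k+l}],[z_{n+5k}, z_{n+5k+l}]] is nonzero for all n (where z_m = x_m + x_{m+l}). Then K⁽²⁾_{n+k} = −K⁽³⁾_n for all n. -/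
theorem littlepi_coefficient_relation (k l : ℤ) (hk : 0 < k) (hl : 0 < l)
    (x : ℤ → ℝ) (hx : ∀ n, 0 < x n)
    (hrec : ∀ n : ℤ, x n * x (n + 2*k + l) = x (n + 2*k) * x (n + l) + x (n + k) + x (n + k + l))
    (z : ℤ → ℝ) (hz : ∀ n, z n = x n + x (n + l))
    (K2 K3 : ℤ → ℝ)
    (hK2per : ∀ n, K2 (n + l) = K2 n) (hK3per : ∀ n, K3 (n + l) = K3 n)
    (hlin : ∀ n : ℤ, x (n + 6*k) + K3 n * x (n + 4*k) + K2 n * x (n + 2*k) - x n = 0)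
    (hdet : ∀ n : ℤ, Matrix.det !![z (n + 3*k), z (n + 3*k + l);
                                    z (n + 5*k), z (n + 5*k + l)] ≠ 0) :
    ∀ n : ℤ, K2 (n + k) = -K3 n := by
  have keyx : ∀ a b : ℤ, a = b → x a = x b := fun a b h => by rw [h]
  have keyz : ∀ a b : ℤ, a = b → z a = z b := fun a b h => by rw [h]
  have key2 : ∀ a b : ℤ, a = b → K2 a = K2 b := fun a b h => by rw [h]
  have key3 : ∀ a b : ℤ, a = b → K3 a = K3 b := fun a b h => by rw [h]
  -- the key relation
  have hE : ∀ n : ℤ, (K3 n + K2 (n + k)) * z (n + 3*k)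
      + (K3 (n + k) + K2 (n + 2*k)) * z (n + 5*k) = 0 := by
    intro n
    have A1 := hlin n
    have A2 : x (n+6*k+l) + K3 n * x (n+4*k+l) + K2 n * x (n+2*k+l) - x (n+l) = 0 := by
      have h := hlin (n+l)
      rw [hK3per, hK2per,
        keyx (n+l+6*k) (n+6*k+l) (by ring),
        keyx (n+l+4*k) (n+4*k+l) (by ring),
        keyx (n+l+2*k) (n+2*k+l) (by ring)] at h
      exact h
    have A3 : x (n+8*k) + K3 (n+2*k) * x (n+6*k) + K2 (n+2*k) * x (n+4*k) - x (n+2*k) = 0 := by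
      have h := hlin (n+2*k)
      rw [keyx (n+2*k+6*k) (n+8*k) (by ring),
        keyx (n+2*k+4*k) (n+6*k) (by ring),
        keyx (n+2*k+2*k) (n+4*k) (by ring)] at h
      exact h
    have A4 : x (n+8*k+l) + K3 (n+2*k) * x (n+6*k+l) + K2 (n+2*k) * x (n+4*k+l)
        - x (n+2*k+l) = 0 := by
      have h := hlin (n+2*k+l)
      rw [hK3per, hK2per,
        keyx (n+2*k+l+6*k) (n+8*k+l) (by ring),
        keyx (n+2*k+l+4*k) (n+6*k+l) (by ring),
        keyx (n+2*k+l+2*k) (n+4*k+l) (by ring)] at h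
      exact h
    have A5 : x (n+7*k) + K3 (n+k) * x (n+5*k) + K2 (n+k) * x (n+3*k) - x (n+k) = 0 := by
      have h := hlin (n+k)
      rw [keyx (n+k+6*k) (n+7*k) (by ring),
        keyx (n+k+4*k) (n+5*k) (by ring),
        keyx (n+k+2*k) (n+3*k) (by ring)] at h
      exact h
    have A6 : x (n+7*k+l) + K3 (n+k) * x (n+5*k+l) + K2 (n+k) * x (n+3*k+l)
        - x (n+k+l) = 0 := by
      have h := hlin (n+k+l)
      rw [hK3per, hK2per,
        keyx (n+k+l+6*k) (n+7*k+l) (by ring),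
        keyx (n+k+l+4*k) (n+5*k+l) (by ring),
        keyx (n+k+l+2*k) (n+3*k+l) (by ring)] at h
      exact h
    have R0 := hrec n
    have R2 : x (n+2*k) * x (n+4*k+l) = x (n+4*k) * x (n+2*k+l) + x (n+3*k) + x (n+3*k+l) := by
      have h := hrec (n+2*k)
      rw [keyx (n+2*k+2*k+l) (n+4*k+l) (by ring),
        keyx (n+2*k+2*k) (n+4*k) (by ring),
        keyx (n+2*k+k) (n+3*k) (by ring),
        keyx (n+2*k+k+l) (n+3*k+l) (by ring)] at h
      exact h
    have R4 : x (n+4*k) * x (n+6*k+l) = x (n+6*k) * x (n+4*k+l) + x (n+5*k) + x (n+5*k+l) := by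
      have h := hrec (n+4*k)
      rw [keyx (n+4*k+2*k+l) (n+6*k+l) (by ring),
        keyx (n+4*k+2*k) (n+6*k) (by ring),
        keyx (n+4*k+k) (n+5*k) (by ring),
        keyx (n+4*k+k+l) (n+5*k+l) (by ring)] at h
      exact h
    have R6 : x (n+6*k) * x (n+8*k+l) = x (n+8*k) * x (n+6*k+l) + x (n+7*k) + x (n+7*k+l) := by
      have h := hrec (n+6*k)
      rw [keyx (n+6*k+2*k+l) (n+8*k+l) (by ring),
        keyx (n+6*k+2*k) (n+8*k) (by ring),
        keyx (n+6*k+k) (n+7*k) (by ring),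
        keyx (n+6*k+k+l) (n+7*k+l) (by ring)] at h
      exact h
    rw [hz (n+3*k), hz (n+5*k),
      keyx (n+3*k+l) (n+3*k+l) rfl, keyx (n+5*k+l) (n+5*k+l) rfl]
    linear_combination x (n+2*k) * A2 - x (n+2*k+l) * A1 + x (n+6*k+l) * A3 - x (n+6*k) * A4
      + A5 + A6 - K3 n * R2 - K2 (n+2*k) * R4 - R0 + R6
  intro n
  have E1 := hE n
  have E2 : (K3 n + K2 (n + k)) * z (n + 3*k + l)
      + (K3 (n + k) + K2 (n + 2*k)) * z (n + 5*k + l) = 0 := by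
    have h := hE (n + l)
    rw [hK3per,
      key2 (n+l+k) (n+k+l) (by ring), hK2per (n+k),
      key3 (n+l+k) (n+k+l) (by ring), hK3per (n+k),
      key2 (n+l+2*k) (n+2*k+l) (by ring), hK2per (n+2*k),
      keyz (n+l+3*k) (n+3*k+l) (by ring),
      keyz (n+l+5*k) (n+5*k+l) (by ring)] at h
    exact h
  have hd := hdet n
  rw [Matrix.det_fin_two_of] at hd
  have h0 : (K3 n + K2 (n + k)) *
      (z (n+3*k) * z (n+5*k+l) - z (n+3*k+l) * z (n+5*k)) = 0 := by
    linear_combination z (n+5*k+l) * E1 - z (n+5*k) * E2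
  rcases mul_eq_zero.mp h0 with h | h
  · linarith
  · exact absurd h hd
end

section
/- Let (u_{s,t}) be a family of nonzero field elements satisfying the lattice equation (u_{s+1,t+2} + u_{s+1,t} + a)·u_{s,t+1} = (u_{s,t+2} + u_{s,t} + a)·u_{s+1,t+1}. Then for each t there exists J(t) (independent of s) such that u_{s,t+3} − (J(t+1)+1)·u_{s,t+2} + (J(t)+1)·u_{s,t+1} − u_{s,t} = 0 for all s. -/
theorem lattice_linear_relation_t {F : Type*} [Field F] (a : F)
    (u : ℤ → ℤ → F) (hu : ∀ s t, u s t ≠ 0)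
    (hlat : ∀ s t : ℤ, (u (s+1) (t+2) + u (s+1) t + a) * u s (t+1)
        = (u s (t+2) + u s t + a) * u (s+1) (t+1)) :
    ∃ J : ℤ → F, ∀ s t : ℤ,
      u s (t+3) - (J (t+1) + 1) * u s (t+2) + (J t + 1) * u s (t+1) - u s t = 0 := by
  have key : ∀ s t : ℤ, (u s (t+2) + u s t + a) * u 0 (t+1)
      = (u 0 (t+2) + u 0 t + a) * u s (t+1) := by
    intro s t
    induction s using Int.induction_on with
    | zero => ring
    | succ n ih =>
      have h := hlat n t
      apply mul_right_cancel₀ (hu n (t+1))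
      linear_combination u 0 (t+1) * h + u ((n:ℤ)+1) (t+1) * ih
    | pred n ih =>
      have h := hlat (-n-1) t
      have e : (-n - 1 : ℤ) + 1 = -n := by ring
      rw [e] at h
      apply mul_right_cancel₀ (hu (-n) (t+1))
      linear_combination -u 0 (t+1) * h + u (-(n:ℤ)-1) (t+1) * ih
  refine ⟨fun t => (u 0 (t+2) + u 0 t + a) / u 0 (t+1), fun s t => ?_⟩
  have hJ : ∀ t : ℤ, ((u 0 (t+2) + u 0 t + a) / u 0 (t+1)) * u s (t+1)
      = u s (t+2) + u s t + a := by
    intro t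
    rw [div_mul_eq_mul_div, ← key s t, mul_div_assoc, div_self (hu 0 (t+1)), mul_one]
  have h1 := hJ t
  have h2 := hJ (t+1)
  have e3 : (t : ℤ) + 1 + 2 = t + 3 := by ring
  have e2 : (t : ℤ) + 1 + 1 = t + 2 := by ring
  simp only [e3, e2] at h2 ⊢
  linear_combination h1 - h2
end

section
/- Let (u_{s,t}) be a family of nonzero field elements satisfying the lattice equation (u_{s+1,t+2} + u_{s+1,t} + a)·u_{s,t+1} = (u_{s,t+2} + u_{s,t} + a)·u_{s+1,t+1}. Then for all s and t the 4×4 Casorati determinant det[[u_{s+i,t+j}]]_{0≤i,j≤3} equals zero. -/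
theorem lattice_casorati_vanishes {F : Type*} [Field F] (a : F)
    (u : ℤ → ℤ → F) (hu : ∀ s t, u s t ≠ 0)
    (hlat : ∀ s t : ℤ, (u (s+1) (t+2) + u (s+1) t + a) * u s (t+1)
        = (u s (t+2) + u s t + a) * u (s+1) (t+1)) :
    ∀ s t : ℤ,
      Matrix.det (Matrix.of fun i j : Fin 4 => u (s + (i : ℤ)) (t + (j : ℤ))) = 0 := by
  intro s t
  obtain ⟨r, hrdef⟩ : ∃ r : ℤ → ℤ → F,
      ∀ s' t', r s' t' * u s' (t'+1) = u s' (t'+2) + u s' t' + a :=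
    ⟨fun s t => (u s (t+2) + u s t + a) / u s (t+1),
      fun s' t' => div_mul_cancel₀ _ (hu _ _)⟩
  have hr : ∀ s' t', r (s'+1) t' = r s' t' := by
    intro s' t'
    have h1 : r (s'+1) t' * (u (s'+1) (t'+1) * u s' (t'+1))
        = r s' t' * (u (s'+1) (t'+1) * u s' (t'+1)) := by
      linear_combination u s' (t'+1) * hrdef (s'+1) t' - u (s'+1) (t'+1) * hrdef s' t' + hlat s' t'
    exact mul_right_cancel₀ (mul_ne_zero (hu _ _) (hu _ _)) h1
  have hrk : ∀ k : ℕ, ∀ t', r (s + k) t' = r s t' := by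
    intro k
    induction k with
    | zero => simp
    | succ n ih =>
        intro t'
        have : (s + (n+1 : ℕ) : ℤ) = (s + n) + 1 := by push_cast; ring
        rw [this, hr, ih]
  have key : ∀ s' t', u s' (t'+2) = r s' t' * u s' (t'+1) - u s' t' - a := by
    intro s' t'
    linear_combination -(hrdef s' t')
  rw [← Matrix.exists_mulVec_eq_zero_iff]
  refine ⟨![1, -(1 + r s t), 1 + r s (t+1), -1], ?_, ?_⟩
  · intro h
    have := congrFun h 0
    simp at this
  · funext i
    have hi : (s + (i : ℤ)) = s + ((i : ℕ) : ℤ) := by norm_cast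
    have e2 : u (s + (i : ℤ)) (t+2) = r s t * u (s + (i : ℤ)) (t+1) - u (s + (i : ℤ)) t - a := by
      rw [hi, key, hrk]
    have e3 : u (s + (i : ℤ)) (t+3) = r s (t+1) * u (s + (i : ℤ)) (t+2) - u (s + (i : ℤ)) (t+1) - a := by
      have h := key (s + (i : ℤ)) (t+1)
      rw [show t+1+2 = t+3 by ring, show t+1+1 = t+2 by ring] at h
      rw [hi] at h ⊢
      rw [h, hrk]
    simp only [Matrix.mulVec, dotProduct, Fin.sum_univ_four, Matrix.of_apply,
      Matrix.cons_val_zero, Matrix.cons_val_one, Matrix.head_cons, Matrix.cons_val_two,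
      Matrix.tail_cons, Matrix.cons_val_three, Pi.zero_apply]
    norm_num [show ((0:Fin 4):ℕ) = 0 from rfl, show ((1:Fin 4):ℕ) = 1 from rfl,
      show ((2:Fin 4):ℕ) = 2 from rfl, show ((3:Fin 4):ℕ) = 3 from rfl]
    linear_combination e2 - e3
end

section
/- When k = 1, the recurrence (x_{n+l+2} + x_{n+l} + a)·x_{n+1} = (x_{n+2} + x_n + a)·x_{n+l+1} is the total difference of the Extreme polynomial relation: namely, if x_{n+l+1}·x_n = x_{n+l}·x_{n+1} + a·(x_{n+1} + x_{n+2} + ... + x_{n+l}) + b holds for all n with some constant b, then (x_{n+l+2} + x_{n+l} + a)·x_{n+1} = (x_{n+2} + x_n + a)·x_{n+l+1} holds for all n. -/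
theorem extreme_total_difference {F : Type*} [Field F] (l : ℕ) (hl : 0 < l) (a b : F)
    (x : ℤ → F)
    (hrec : ∀ n : ℤ, x (n + l + 1) * x n
        = x (n + l) * x (n + 1) + a * (∑ i ∈ Finset.range l, x (n + 1 + i)) + b) :
    ∀ n : ℤ, (x (n + l + 2) + x (n + l) + a) * x (n + 1)
        = (x (n + 2) + x n + a) * x (n + l + 1) := by
  intro n
  have h1 := hrec n
  have h2 := hrec (n + 1)
  have hsum : (∑ i ∈ Finset.range l, x (n + 1 + 1 + i)) + x (n + 1)
      = (∑ i ∈ Finset.range l, x (n + 1 + i)) + x (n + l + 1) := by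
    have e1 : (∑ i ∈ Finset.range (l + 1), x (n + 1 + i))
        = (∑ i ∈ Finset.range l, x (n + 1 + (i + 1))) + x (n + 1 + 0) :=
      Finset.sum_range_succ' _ l
    have e2 : (∑ i ∈ Finset.range (l + 1), x (n + 1 + i))
        = (∑ i ∈ Finset.range l, x (n + 1 + i)) + x (n + 1 + l) :=
      Finset.sum_range_succ _ l
    have e3 : (∑ i ∈ Finset.range l, x (n + 1 + (i + 1)))
        = ∑ i ∈ Finset.range l, x (n + 1 + 1 + i) := by
      apply Finset.sum_congr rfl
      intro i _
      ring_nf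
    rw [e3] at e1
    simp only [add_zero] at e1
    rw [show n + 1 + (l:ℤ) = n + l + 1 by ring] at e2
    linear_combination e2 - e1
  have h2' : x (n + l + 2) * x (n + 1)
      = x (n + l + 1) * x (n + 2) + a * (∑ i ∈ Finset.range l, x (n + 1 + 1 + i)) + b := by
    convert h2 using 3 <;> ring
  linear_combination h2' - h1 + a * hsum
end

section
/- Let (x_n) be a sequence of nonzero field elements satisfying the recurrence (x_{n+2k+l} + x_{n+l} + a)·x_{n+k} = (x_{n+2k} + x_n + a)·x_{n+k+l}. Then the quantity b_n := ∑_{j=0}^{k-1} (x_{n+j}·x_{n+j+k+l} − x_{n+j+k}·x_{n+j+l}) − a·∑_{j=0}^{l-1} x_{n+j+k} is a first integral: b_{n+1} = b_n for all n. -/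
private lemma tele {F : Type*} [Field F] (f : ℤ → F) (n : ℤ) (k : ℕ) :
    (∑ j ∈ Finset.range k, f (n + 1 + j)) - (∑ j ∈ Finset.range k, f (n + j))
      = f (n + k) - f n := by
  induction k with
  | zero => simp
  | succ m ih =>
    rw [Finset.sum_range_succ, Finset.sum_range_succ]
    have e : n + 1 + (m : ℤ) = n + ((m + 1 : ℕ) : ℤ) := by push_cast; ring
    rw [e]
    linear_combination ih

theorem reduced_first_integral {F : Type*} [Field F] (k l : ℕ) (hk : 0 < k) (hl : 0 < l) (a : F)
    (x : ℤ → F) (hx : ∀ n, x n ≠ 0)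
    (hrec : ∀ n : ℤ, (x (n + 2*k + l) + x (n + l) + a) * x (n + k)
        = (x (n + 2*k) + x n + a) * x (n + k + l))
    (b : ℤ → F)
    (hb : ∀ n, b n = (∑ j ∈ Finset.range k,
          (x (n + j) * x (n + j + k + l) - x (n + j + k) * x (n + j + l)))
        - a * ∑ j ∈ Finset.range l, x (n + j + k)) :
    ∀ n : ℤ, b (n + 1) = b n := by
  intro n
  have h1 := tele (fun t => x t * x (t + k + l) - x (t + k) * x (t + l)) n k
  have h2 := tele (fun t => x (t + k)) n l
  have h3 := hrec n
  have e1 : n + (k : ℤ) + k + l = n + 2 * k + l := by ring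
  have e2 : n + (k : ℤ) + k = n + 2 * k := by ring
  have e3 : n + (l : ℤ) + k = n + k + l := by ring
  rw [e1, e2] at h1
  rw [e3] at h2
  rw [hb, hb]
  linear_combination h1 - a * h2 + h3
end

section
/- Let x_0, x_1, x_2 be positive rational numbers (or elements of the field ℚ(x_0,x_1,x_2)) and define x_n for n ≥ 3 by x_{n+3}·x_n = x_{n+2}·x_{n+1} + x_{n+2} + x_{n+1}. Then the quantity 𝒦_n := (x_{n+6} − x_n)/(x_{n+4} − x_{n+2}) is well-defined and independent of n, i.e., (x_{n+7} − x_{n+1})·(x_{n+4} − x_{n+2}) = (x_{n+6} − x_n)·(x_{n+5} − x_{n+3}) for all n ≥ 0. -/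
theorem simple_littlepi_K_invariant
    (x : ℕ → ℝ) (h0 : 0 < x 0) (h1 : 0 < x 1) (h2 : 0 < x 2)
    (hrec : ∀ n : ℕ, x (n + 3) = (x (n + 2) * x (n + 1) + x (n + 2) + x (n + 1)) / x n) :
    ∀ n : ℕ, (x (n + 7) - x (n + 1)) * (x (n + 4) - x (n + 2))
        = (x (n + 6) - x n) * (x (n + 5) - x (n + 3)) := by
  have hpos : ∀ n, 0 < x n := by
    intro n
    induction n using Nat.strong_induction_on with
    | _ n ih =>
      match n with
      | 0 => exact h0
      | 1 => exact h1
      | 2 => exact h2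
      | (m+3) =>
        rw [hrec m]
        have h1 := ih m (by omega)
        have h2 := ih (m+1) (by omega)
        have h3 := ih (m+2) (by omega)
        positivity
  have hmul : ∀ n, x (n + 3) * x n = x (n + 2) * x (n + 1) + x (n + 2) + x (n + 1) := by
    intro n
    rw [hrec n, div_mul_cancel₀ _ (hpos n).ne']
  have star : ∀ m, x (m+1) * (x (m+4) + x (m+2) + 1) = x (m+3) * (x m + x (m+2) + 1) := by
    intro m
    have ha := hmul m
    have hb := hmul (m+1)
    rw [show m+1+3 = m+4 by ring, show m+1+2 = m+3 by ring, show m+1+1 = m+2 by ring] at hb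
    linear_combination hb - ha
  intro n
  have s0 := star n
  have s1 := star (n+1)
  have s2 := star (n+2)
  have s3 := star (n+3)
  rw [show n+1+4 = n+5 by ring, show n+1+3 = n+4 by ring, show n+1+2 = n+3 by ring,
      show n+1+1 = n+2 by ring] at s1
  rw [show n+2+4 = n+6 by ring, show n+2+3 = n+5 by ring, show n+2+2 = n+4 by ring,
      show n+2+1 = n+3 by ring] at s2
  rw [show n+3+4 = n+7 by ring, show n+3+3 = n+6 by ring, show n+3+2 = n+5 by ring,
      show n+3+1 = n+4 by ring] at s3
  -- abbreviations
  have hA : x (n+1) * (x (n+4) + x (n+6) + 1) = x (n+5) * (x n + x (n+2) + 1) := by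
    have key : x (n+3) * (x (n+1) * (x (n+4) + x (n+6) + 1))
        = x (n+3) * (x (n+5) * (x n + x (n+2) + 1)) := by
      linear_combination x (n+1) * s2 + x (n+5) * s0
    exact mul_left_cancel₀ (hpos (n+3)).ne' key
  have hB : x (n+2) * (x (n+5) + x (n+7) + 1) = x (n+6) * (x (n+1) + x (n+3) + 1) := by
    have key : x (n+4) * (x (n+2) * (x (n+5) + x (n+7) + 1))
        = x (n+4) * (x (n+6) * (x (n+1) + x (n+3) + 1)) := by
      linear_combination x (n+2) * s3 + x (n+6) * s1
    exact mul_left_cancel₀ (hpos (n+4)).ne' key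
  have hC : (x (n+4) - x (n+2)) * (x (n+1) + x (n+3) + 1)
      = x (n+2) * (x (n+5) - x (n+1)) := by linear_combination -s1
  have hD : (x (n+5) - x (n+3)) * (x (n+2) + x (n+4) + 1)
      = x (n+3) * (x (n+6) - x (n+2)) := by linear_combination -s2
  have main : x (n+1) * x (n+2) * x (n+3) *
      ((x (n + 7) - x (n + 1)) * (x (n + 4) - x (n + 2))
        - (x (n + 6) - x n) * (x (n + 5) - x (n + 3))) = 0 := by
    linear_combination
      (x (n+1) * x (n+3) * (x (n+4) - x (n+2))) * hB
      - (x (n+2) * x (n+3) * (x (n+5) - x (n+3))) * hA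
      + ((x (n+4) - x (n+2)) * (x (n+5) - x (n+3)) * (x (n+1) + x (n+3) + 1)) * s0
      - ((x (n+4) - x (n+2)) * x (n+1) * (x (n+1) + x (n+3) + 1)) * hD
      + (x (n+3) * (x (n+5) - x (n+3)) * (x n + x (n+2) + 1)) * hC
  have hne : x (n+1) * x (n+2) * x (n+3) ≠ 0 := (mul_pos (mul_pos (hpos (n+1)) (hpos (n+2))) (hpos (n+3))).ne'
  have := (mul_eq_zero.mp main).resolve_left hne
  linarith
end

section
/- Let x_0, x_1, x_2 be positive reals and define x_n by the recurrence x_{n+3}·x_n = x_{n+2}·x_{n+1} + x_{n+2} + x_{n+1}. Then the quantity 𝒦 = P⁽⁰⁾ + P⁽¹⁾ + P⁽²⁾, where P⁽⁰⁾ = 1 + x_0/x_2 + x_2/x_0, P⁽¹⁾ = (1 + x_2/x_0)·(x_0+x_1)/(x_1·x_2) + (1 + x_0/x_2)·(x_1+x_2)/(x_0·x_1), P⁽²⁾ = 1/(x_1·x_2) + 1/(x_0·x_1) + 1/(x_0·x_2), satisfies x_6 − 𝒦·x_4 + 𝒦·x_2 − x_0 = 0. -/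
theorem simple_littlepi_explicit_K
    (x : ℕ → ℝ) (h0 : 0 < x 0) (h1 : 0 < x 1) (h2 : 0 < x 2)
    (hrec : ∀ n : ℕ, x (n + 3) = (x (n + 2) * x (n + 1) + x (n + 2) + x (n + 1)) / x n)
    (𝒦 : ℝ)
    (h𝒦 : 𝒦 = (1 + x 0 / x 2 + x 2 / x 0)
        + ((1 + x 2 / x 0) * (x 0 + x 1) / (x 1 * x 2)
            + (1 + x 0 / x 2) * (x 1 + x 2) / (x 0 * x 1))
        + (1 / (x 1 * x 2) + 1 / (x 0 * x 1) + 1 / (x 0 * x 2))) :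
    x 6 - 𝒦 * x 4 + 𝒦 * x 2 - x 0 = 0 := by
  have e3 := hrec 0
  have e4 := hrec 1
  have e5 := hrec 2
  have e6 := hrec 3
  norm_num at e3 e4 e5 e6
  have h3 : 0 < x 3 := by rw [e3]; positivity
  have h4 : 0 < x 4 := by rw [e4]; positivity
  have h5 : 0 < x 5 := by rw [e5]; positivity
  rw [h𝒦, e6, e5, e4, e3]
  field_simp
  ring
end

section
/- For the recurrence x_{n+3}·x_n = x_{n+2}·x_{n+1} + x_{n+2} + x_{n+1} with positive initial values, every iterate x_n is a Laurent polynomial in x_0, x_1, x_2 with integer coefficients. -/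
set_option synthInstance.maxHeartbeats 1000000
set_option maxHeartbeats 1000000

open MvPolynomial

local notation "R3" => MvPolynomial (Fin 3) ℤ
local notation "F3" => FractionRing (MvPolynomial (Fin 3) ℤ)

/-- Laurent predicate matching the goal. -/
def IsLaur (f : F3) : Prop :=
  ∃ (p : R3) (a b c : ℕ),
    f * algebraMap R3 F3 (X 0 ^ a * X 1 ^ b * X 2 ^ c) = algebraMap R3 F3 p

lemma IsLaur.of_poly (p : R3) : IsLaur (algebraMap R3 F3 p) :=
  ⟨p, 0, 0, 0, by simp⟩

lemma IsLaur.one : IsLaur (1 : F3) := ⟨1, 0, 0, 0, by simp⟩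

lemma IsLaur.add {f g : F3} (hf : IsLaur f) (hg : IsLaur g) : IsLaur (f + g) := by
  obtain ⟨p, a, b, c, hp⟩ := hf
  obtain ⟨q, a', b', c', hq⟩ := hg
  refine ⟨p * (X 0 ^ a' * X 1 ^ b' * X 2 ^ c') + q * (X 0 ^ a * X 1 ^ b * X 2 ^ c),
    a + a', b + b', c + c', ?_⟩
  simp only [pow_add, map_mul, map_add, map_pow] at *
  linear_combination (algebraMap R3 F3 (X 0) ^ a' * algebraMap R3 F3 (X 1) ^ b' *
      algebraMap R3 F3 (X 2) ^ c') * hp +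
    (algebraMap R3 F3 (X 0) ^ a * algebraMap R3 F3 (X 1) ^ b *
      algebraMap R3 F3 (X 2) ^ c) * hq

lemma IsLaur.mul {f g : F3} (hf : IsLaur f) (hg : IsLaur g) : IsLaur (f * g) := by
  obtain ⟨p, a, b, c, hp⟩ := hf
  obtain ⟨q, a', b', c', hq⟩ := hg
  refine ⟨p * q, a + a', b + b', c + c', ?_⟩
  simp only [pow_add, map_mul, map_pow] at *
  linear_combination (algebraMap R3 F3 (X 0) ^ a' * algebraMap R3 F3 (X 1) ^ b' *
      algebraMap R3 F3 (X 2) ^ c' * g) * hp +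
    (algebraMap R3 F3 p) * hq

lemma IsLaur.neg {f : F3} (hf : IsLaur f) : IsLaur (-f) := by
  obtain ⟨p, a, b, c, hp⟩ := hf
  exact ⟨-p, a, b, c, by rw [map_neg, ← hp]; ring⟩

lemma IsLaur.sub {f g : F3} (hf : IsLaur f) (hg : IsLaur g) : IsLaur (f - g) := by
  rw [sub_eq_add_neg]; exact hf.add hg.neg

theorem simple_littlepi_laurent
    (x : ℕ → FractionRing (MvPolynomial (Fin 3) ℤ))
    (hinit : ∀ i : Fin 3, x i = algebraMap (MvPolynomial (Fin 3) ℤ) _ (MvPolynomial.X i))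
    (hx : ∀ n, x n ≠ 0)
    (hrec : ∀ n : ℕ, x (n + 3) * x n = x (n + 2) * x (n + 1) + x (n + 2) + x (n + 1)) :
    ∀ n : ℕ, ∃ (p : MvPolynomial (Fin 3) ℤ) (a b c : ℕ),
      x n * algebraMap (MvPolynomial (Fin 3) ℤ) _
          (MvPolynomial.X 0 ^ a * MvPolynomial.X 1 ^ b * MvPolynomial.X 2 ^ c)
        = algebraMap (MvPolynomial (Fin 3) ℤ) _ p := by
  have h0 : x 0 = algebraMap R3 F3 (X 0) := by simpa using hinit 0
  have h1 : x 1 = algebraMap R3 F3 (X 1) := by simpa using hinit 1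
  have h2 : x 2 = algebraMap R3 F3 (X 2) := by simpa using hinit 2
  set K : ℕ → F3 := fun n => (x (n + 2) + x n + 1) * (x (n + 1))⁻¹ with hK
  -- linearized recurrence
  have hlin : ∀ n, x (n + 2) = K n * x (n + 1) - x n - 1 := by
    intro n
    have hne : x (n + 1) ≠ 0 := hx (n + 1)
    simp only [hK]
    field_simp
    ring
  -- 2-periodicity of K
  have hper : ∀ n, K (n + 2) = K n := by
    intro n
    have hne1 : x (n + 1) ≠ 0 := hx (n + 1)
    have hne3 : x (n + 3) ≠ 0 := hx (n + 3)
    have hr1 := hrec (n + 1)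
    have hr0 := hrec n
    simp only [hK, show n + 2 + 2 = n + 4 from rfl, show n + 2 + 1 = n + 3 from rfl,
      show n + 1 + 3 = n + 4 from rfl, show n + 1 + 2 = n + 3 from rfl,
      show n + 1 + 1 = n + 2 from rfl] at *
    field_simp
    linear_combination hr1 - hr0
  -- K 0 and K 1 are Laurent
  have hK0 : IsLaur (K 0) := by
    refine ⟨X 2 + X 0 + 1, 0, 1, 0, ?_⟩
    have hne : x 1 ≠ 0 := hx 1
    simp only [hK, pow_zero, pow_one, one_mul, mul_one, map_add, map_one, ← h0, ← h1, ← h2]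
    field_simp
  have hK1 : IsLaur (K 1) := by
    refine ⟨X 2 * X 1 + X 2 + X 1 + X 1 * X 0 + X 0, 1, 0, 1, ?_⟩
    have hne : x 2 ≠ 0 := hx 2
    have hr0 := hrec 0
    simp only [hK, pow_zero, pow_one, one_mul, mul_one, map_add, map_mul, map_one,
      ← h0, ← h1, ← h2]
    field_simp
    linear_combination hr0
  have hKor : ∀ n, K n = K 0 ∨ K n = K 1 := by
    intro n
    induction n using Nat.twoStepInduction with
    | zero => exact Or.inl rfl
    | one => exact Or.inr rfl
    | more n ih _ =>
      rcases ih with h | h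
      · exact Or.inl (by rw [hper n, h])
      · exact Or.inr (by rw [hper n, h])
  have hKall : ∀ n, IsLaur (K n) := by
    intro n
    rcases hKor n with h | h
    · rw [h]; exact hK0
    · rw [h]; exact hK1
  have main : ∀ n, IsLaur (x n) ∧ IsLaur (x (n + 1)) := by
    intro n
    induction n with
    | zero =>
      constructor
      · rw [h0]; exact IsLaur.of_poly _
      · rw [h1]; exact IsLaur.of_poly _
    | succ n ih =>
      refine ⟨ih.2, ?_⟩
      rw [hlin n]
      exact (((hKall n).mul ih.2).sub ih.1).sub IsLaur.one
  exact fun n => (main n).1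
end
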